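/- Let N ≥ 1, λ > 0 and s ∈ ℝ^N. Define K := { u ∈ ℝ^N : there exist reals z_{ij} for 1 ≤ i < j ≤ N with |z_{ij}| ≤ λ and u_i = Σ_{j>i} z_{ij} − Σ_{j<i} z_{ji} for every i }. Then K is a nonempty compact convex set, the function p_s(π) := (1/2)Σ_{i=1}^N (π_i − s_i)² + λ Σ_{1≤i<j≤N} |π_i − π_j| has a unique minimizer π* over ℝ^N, and the metric projection u* of s onto K satisfies u* = s − π*. -/

import Mathlib

noncomputable section

/-- The fused-lasso objective `p_s(π) = (1/2) Σ (π_i − s_i)² + λ Σ_{i<j} |π_i − π_j|`. -/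
def pfun {N : ℕ} (lam : ℝ) (s π : Fin N → ℝ) : ℝ :=
  (1 / 2) * ∑ i, (π i - s i) ^ 2 + lam * ∑ i, ∑ j, if i < j then |π i - π j| else 0

/-- Euclidean norm on `ℝ^N`. -/
def eunorm {k : ℕ} (y : Fin k → ℝ) : ℝ := Real.sqrt (∑ i, y i ^ 2)

open Finset

private lemma stmt11_sign_mul_self (x : ℝ) : Real.sign x * x = |x| := by
  rcases lt_trichotomy x 0 with h | h | h
  · rw [Real.sign_of_neg h, abs_of_neg h]; ring
  · simp [h]
  · rw [Real.sign_of_pos h, abs_of_pos h]; ring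

private lemma stmt11_abs_sign_le_one (x : ℝ) : |Real.sign x| ≤ 1 := by
  rcases lt_trichotomy x 0 with h | h | h
  · rw [Real.sign_of_neg h]; norm_num
  · simp [h]
  · rw [Real.sign_of_pos h]; norm_num

private lemma stmt11_rearrange {N : ℕ} (z : Fin N → Fin N → ℝ) (π : Fin N → ℝ) :
    ∑ i, ((∑ j, if i < j then z i j else 0) - (∑ j, if j < i then z j i else 0)) * π i
      = ∑ i, ∑ j, if i < j then z i j * (π i - π j) else 0 := by
  have h1 : ∀ i : Fin N,
      ((∑ j, if i < j then z i j else 0) - (∑ j, if j < i then z j i else 0)) * π i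
        = (∑ j, if i < j then z i j * π i else 0) - (∑ j, if j < i then z j i * π i else 0) := by
    intro i
    rw [sub_mul, Finset.sum_mul, Finset.sum_mul]
    congr 1 <;> exact Finset.sum_congr rfl fun j _ => by split_ifs <;> ring
  calc ∑ i, ((∑ j, if i < j then z i j else 0) - (∑ j, if j < i then z j i else 0)) * π i
      = ∑ i, ((∑ j, if i < j then z i j * π i else 0) - ∑ j, if j < i then z j i * π i else 0) :=
        Finset.sum_congr rfl fun i _ => h1 i
    _ = (∑ i, ∑ j, if i < j then z i j * π i else 0)
          - ∑ i, ∑ j, if j < i then z j i * π i else 0 := Finset.sum_sub_distrib _ _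
    _ = (∑ i, ∑ j, if i < j then z i j * π i else 0)
          - ∑ j, ∑ i, if j < i then z j i * π i else 0 := by congr 1; exact Finset.sum_comm
    _ = ∑ i, ∑ j, if i < j then z i j * (π i - π j) else 0 := by
        rw [← Finset.sum_sub_distrib]
        exact Finset.sum_congr rfl fun i _ => by
          rw [← Finset.sum_sub_distrib]
          exact Finset.sum_congr rfl fun j _ => by split_ifs <;> ring

private lemma stmt11_F1 {N : ℕ} {lam : ℝ} (z : Fin N → Fin N → ℝ)
    (hz : ∀ i j, i < j → |z i j| ≤ lam) (π : Fin N → ℝ) :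
    ∑ i, ((∑ j, if i < j then z i j else 0) - (∑ j, if j < i then z j i else 0)) * π i
      ≤ lam * ∑ i, ∑ j, if i < j then |π i - π j| else 0 := by
  rw [stmt11_rearrange, Finset.mul_sum]
  refine Finset.sum_le_sum fun i _ => ?_
  rw [Finset.mul_sum]
  refine Finset.sum_le_sum fun j _ => ?_
  split_ifs with h
  · calc z i j * (π i - π j) ≤ |z i j * (π i - π j)| := le_abs_self _
      _ = |z i j| * |π i - π j| := abs_mul _ _
      _ ≤ lam * |π i - π j| := mul_le_mul_of_nonneg_right (hz i j h) (abs_nonneg _)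
  · simp

private lemma stmt11_F2 {N : ℕ} {lam : ℝ} (hlam : 0 ≤ lam) (π : Fin N → ℝ) :
    ∑ i, ((∑ j, if i < j then lam * Real.sign (π i - π j) else 0)
        - (∑ j, if j < i then lam * Real.sign (π j - π i) else 0)) * π i
      = lam * ∑ i, ∑ j, if i < j then |π i - π j| else 0 := by
  rw [stmt11_rearrange (fun i j => lam * Real.sign (π i - π j)) π, Finset.mul_sum]
  refine Finset.sum_congr rfl fun i _ => ?_
  rw [Finset.mul_sum]
  refine Finset.sum_congr rfl fun j _ => ?_
  split_ifs
  · rw [mul_assoc, stmt11_sign_mul_self]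
  · simp

private lemma stmt11_quad {N : ℕ} (s a b : Fin N → ℝ) :
    ∑ i, (b i - s i) ^ 2
      = ∑ i, (a i - s i) ^ 2 + 2 * ∑ i, (a i - s i) * (b i - a i) + ∑ i, (b i - a i) ^ 2 := by
  rw [Finset.mul_sum, ← Finset.sum_add_distrib, ← Finset.sum_add_distrib]
  exact Finset.sum_congr rfl fun i _ => by ring

private lemma stmt11_uniq {N : ℕ} (s : Fin N → ℝ) (g : (Fin N → ℝ) → ℝ)
    (hg : ∀ y w : Fin N → ℝ, g (fun i => (y i + w i) / 2) ≤ (1/2) * g y + (1/2) * g w)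
    (y w : Fin N → ℝ)
    (hy : ∀ π, (1/2) * ∑ i, (y i - s i) ^ 2 + g y ≤ (1/2) * ∑ i, (π i - s i) ^ 2 + g π)
    (hw : ∀ π, (1/2) * ∑ i, (w i - s i) ^ 2 + g w ≤ (1/2) * ∑ i, (π i - s i) ^ 2 + g π) :
    y = w := by
  have h1 := hy (fun i => (y i + w i) / 2)
  have hv1 := hy w
  have hv2 := hw y
  have hq : ∑ i, ((y i + w i) / 2 - s i) ^ 2
      = (1/2) * ∑ i, (y i - s i) ^ 2 + (1/2) * ∑ i, (w i - s i) ^ 2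
        - (1/4) * ∑ i, (y i - w i) ^ 2 := by
    rw [Finset.mul_sum, Finset.mul_sum, Finset.mul_sum, ← Finset.sum_add_distrib,
      ← Finset.sum_sub_distrib]
    exact Finset.sum_congr rfl fun i _ => by ring
  have hgm := hg y w
  have hD : ∑ i, (y i - w i) ^ 2 ≤ 0 := by
    rw [hq] at h1
    linarith
  funext i
  have hci : ∀ i ∈ Finset.univ, (0:ℝ) ≤ (y i - w i) ^ 2 := fun i _ => sq_nonneg _
  have h0 := (Finset.sum_eq_zero_iff_of_nonneg hci).mp
    (le_antisymm hD (Finset.sum_nonneg hci)) i (Finset.mem_univ i)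
  have h0' : y i - w i = 0 := by
    have := (pow_eq_zero_iff two_ne_zero).mp h0
    exact this
  linarith

private lemma stmt11_main {N : ℕ} {lam : ℝ} (hlam : 0 < lam) (s ustar : Fin N → ℝ)
    (zs : Fin N → Fin N → ℝ) (hzs : ∀ i j, i < j → |zs i j| ≤ lam)
    (hus : ∀ i, ustar i = (∑ j, if i < j then zs i j else 0) - (∑ j, if j < i then zs j i else 0))
    (hchar : ∀ u : Fin N → ℝ, (∃ z : Fin N → Fin N → ℝ, (∀ i j, i < j → |z i j| ≤ lam) ∧
        ∀ i, u i = (∑ j, if i < j then z i j else 0) - (∑ j, if j < i then z j i else 0)) →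
        ∑ i, (u i - ustar i) * (s i - ustar i) ≤ 0) :
    ∀ π, pfun lam s (fun i => s i - ustar i) ≤ pfun lam s π := by
  intro π
  have hb : ∀ x : ℝ, |lam * Real.sign x| ≤ lam := by
    intro x
    rw [abs_mul, abs_of_pos hlam]
    calc lam * |Real.sign x| ≤ lam * 1 :=
          mul_le_mul_of_nonneg_left (stmt11_abs_sign_le_one x) hlam.le
      _ = lam := mul_one lam
  -- the maximizing element of K for direction d := s - ustar
  have h2 := hchar
    (fun i => (∑ j, if i < j then lam * Real.sign (s i - ustar i - (s j - ustar j)) else 0)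
      - (∑ j, if j < i then lam * Real.sign (s j - ustar j - (s i - ustar i)) else 0))
    ⟨fun i j => lam * Real.sign (s i - ustar i - (s j - ustar j)),
      fun i j _ => hb _, fun i => rfl⟩
  have hsplit : ∑ i, (((∑ j, if i < j then lam * Real.sign (s i - ustar i - (s j - ustar j)) else 0)
        - (∑ j, if j < i then lam * Real.sign (s j - ustar j - (s i - ustar i)) else 0)) - ustar i)
          * (s i - ustar i)
      = (∑ i, ((∑ j, if i < j then lam * Real.sign (s i - ustar i - (s j - ustar j)) else 0)
          - (∑ j, if j < i then lam * Real.sign (s j - ustar j - (s i - ustar i)) else 0))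
            * (s i - ustar i))
        - ∑ i, ustar i * (s i - ustar i) := by
    rw [← Finset.sum_sub_distrib]
    exact Finset.sum_congr rfl fun i _ => by ring
  have hF2 := stmt11_F2 (N := N) hlam.le (fun i => s i - ustar i)
  have hgeqd : lam * ∑ i, ∑ j,
      (if i < j then |s i - ustar i - (s j - ustar j)| else 0)
      ≤ ∑ i, ustar i * (s i - ustar i) := by
    rw [← hF2]
    rw [hsplit] at h2
    linarith
  have hF1π : ∑ i, ustar i * π i
      ≤ lam * ∑ i, ∑ j, if i < j then |π i - π j| else 0 := by
    calc ∑ i, ustar i * π i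
        = ∑ i, ((∑ j, if i < j then zs i j else 0) - (∑ j, if j < i then zs j i else 0)) * π i :=
          Finset.sum_congr rfl fun i _ => by rw [hus i]
      _ ≤ lam * ∑ i, ∑ j, if i < j then |π i - π j| else 0 := stmt11_F1 zs hzs π
  have hq := stmt11_quad s (fun i => s i - ustar i) π
  have hcross : ∑ i, (s i - ustar i - s i) * (π i - (s i - ustar i))
      = (∑ i, ustar i * (s i - ustar i)) - ∑ i, ustar i * π i := by
    rw [← Finset.sum_sub_distrib]
    exact Finset.sum_congr rfl fun i _ => by ring
  have hsq : (0:ℝ) ≤ ∑ i, (π i - (s i - ustar i)) ^ 2 :=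
    Finset.sum_nonneg fun i _ => sq_nonneg _
  simp only [pfun]
  linarith

/-- the set `K` of vectors `u` with `u_i = Σ_{j>i} z_{ij} − Σ_{j<i} z_{ji}`
for some `z` with `|z_{ij}| ≤ λ` is nonempty, compact and convex; `p_s` has a unique
minimizer `π*` over `ℝ^N`; and the metric projection of `s` onto `K` is `s − π*`. -/
theorem stmt_11 {N : ℕ} (hN : 1 ≤ N) (lam : ℝ) (hlam : 0 < lam) (s : Fin N → ℝ)
    (K : Set (Fin N → ℝ))
    (hK : K = {u | ∃ z : Fin N → Fin N → ℝ, (∀ i j, i < j → |z i j| ≤ lam) ∧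
      ∀ i, u i = (∑ j, if i < j then z i j else 0) - (∑ j, if j < i then z j i else 0)}) :
    K.Nonempty ∧ IsCompact K ∧ Convex ℝ K ∧
    (∃! πstar : Fin N → ℝ, ∀ π, pfun lam s πstar ≤ pfun lam s π) ∧
    ∀ πstar : Fin N → ℝ, (∀ π, pfun lam s πstar ≤ pfun lam s π) →
      (s - πstar) ∈ K ∧ ∀ u ∈ K, eunorm (s - (s - πstar)) ≤ eunorm (s - u) := by
  subst hK
  -- Nonempty
  have hne : ({u | ∃ z : Fin N → Fin N → ℝ, (∀ i j, i < j → |z i j| ≤ lam) ∧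
      ∀ i, u i = (∑ j, if i < j then z i j else 0) - (∑ j, if j < i then z j i else 0)} :
      Set (Fin N → ℝ)).Nonempty := by
    refine ⟨fun _ => 0, fun _ _ => 0, fun i j _ => by simpa using hlam.le, fun i => by simp⟩
  -- Compact
  have hcomp : IsCompact ({u | ∃ z : Fin N → Fin N → ℝ, (∀ i j, i < j → |z i j| ≤ lam) ∧
      ∀ i, u i = (∑ j, if i < j then z i j else 0) - (∑ j, if j < i then z j i else 0)} :
      Set (Fin N → ℝ)) := by
    have himg : ({u | ∃ z : Fin N → Fin N → ℝ, (∀ i j, i < j → |z i j| ≤ lam) ∧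
        ∀ i, u i = (∑ j, if i < j then z i j else 0) - (∑ j, if j < i then z j i else 0)} :
        Set (Fin N → ℝ))
        = (fun z : Fin N → Fin N → ℝ => fun i =>
            (∑ j, if i < j then z i j else 0) - (∑ j, if j < i then z j i else 0)) ''
          (Set.univ.pi fun _ : Fin N => Set.univ.pi fun _ : Fin N => Set.Icc (-lam) lam) := by
      ext u
      constructor
      · rintro ⟨z, hz, hu⟩
        refine ⟨fun i j => if i < j then z i j else 0, ?_, ?_⟩
        · intro i _
          intro j _
          simp only [Set.mem_Icc, ← abs_le]
          split_ifs with h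
          · exact hz i j h
          · simpa using hlam.le
        · funext i
          rw [hu i]
          have A : (∑ j, if i < j then z i j else 0)
              = ∑ j, if i < j then (if i < j then z i j else 0) else 0 :=
            Finset.sum_congr rfl fun j _ => by split_ifs with h <;> simp
          have B : (∑ j, if j < i then z j i else 0)
              = ∑ j, if j < i then (if j < i then z j i else 0) else 0 :=
            Finset.sum_congr rfl fun j _ => by split_ifs with h <;> simp
          rw [A, B]
      · rintro ⟨z, hz, rfl⟩
        exact ⟨z, fun i j _ => abs_le.mpr (hz i (Set.mem_univ i) j (Set.mem_univ j)),
          fun i => rfl⟩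
    rw [himg]
    refine IsCompact.image ?_ ?_
    · exact isCompact_univ_pi fun i => isCompact_univ_pi fun j => isCompact_Icc
    · refine continuous_pi fun i => Continuous.sub ?_ ?_ <;>
        refine continuous_finset_sum _ fun j _ => ?_ <;>
        · split_ifs
          · exact (continuous_apply _).comp (continuous_apply _)
          · exact continuous_const
  -- Convex
  have hconv : Convex ℝ ({u | ∃ z : Fin N → Fin N → ℝ, (∀ i j, i < j → |z i j| ≤ lam) ∧
      ∀ i, u i = (∑ j, if i < j then z i j else 0) - (∑ j, if j < i then z j i else 0)} :
      Set (Fin N → ℝ)) := by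
    rintro u1 ⟨z1, hz1, hu1⟩ u2 ⟨z2, hz2, hu2⟩ a b ha hb hab
    refine ⟨fun i j => a * z1 i j + b * z2 i j, ?_, ?_⟩
    · intro i j hij
      calc |a * z1 i j + b * z2 i j| ≤ |a * z1 i j| + |b * z2 i j| := abs_add_le _ _
        _ = a * |z1 i j| + b * |z2 i j| := by
            rw [abs_mul, abs_mul, abs_of_nonneg ha, abs_of_nonneg hb]
        _ ≤ a * lam + b * lam := by
            gcongr
            exacts [hz1 i j hij, hz2 i j hij]
        _ = lam := by rw [← add_mul, hab, one_mul]
    · intro i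
      have e1 : (∑ j, if i < j then a * z1 i j + b * z2 i j else 0)
          = a * (∑ j, if i < j then z1 i j else 0) + b * (∑ j, if i < j then z2 i j else 0) := by
        rw [Finset.mul_sum, Finset.mul_sum, ← Finset.sum_add_distrib]
        exact Finset.sum_congr rfl fun j _ => by split_ifs <;> ring
      have e2 : (∑ j, if j < i then a * z1 j i + b * z2 j i else 0)
          = a * (∑ j, if j < i then z1 j i else 0) + b * (∑ j, if j < i then z2 j i else 0) := by
        rw [Finset.mul_sum, Finset.mul_sum, ← Finset.sum_add_distrib]
        exact Finset.sum_congr rfl fun j _ => by split_ifs <;> ring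
      simp only [Pi.add_apply, Pi.smul_apply, smul_eq_mul, hu1 i, hu2 i, e1, e2]
      ring
  -- nearest point
  have hfc : Continuous fun u : Fin N → ℝ => ∑ i, (s i - u i) ^ 2 := by fun_prop
  obtain ⟨ustar, huK, humin⟩ := hcomp.exists_isMinOn hne hfc.continuousOn
  obtain ⟨zs, hzs, hus⟩ := id huK
  -- variational characterization of the projection
  have hchar : ∀ u : Fin N → ℝ, (∃ z : Fin N → Fin N → ℝ, (∀ i j, i < j → |z i j| ≤ lam) ∧
      ∀ i, u i = (∑ j, if i < j then z i j else 0) - (∑ j, if j < i then z j i else 0)) →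
      ∑ i, (u i - ustar i) * (s i - ustar i) ≤ 0 := by
    intro u hu
    have hC : (0:ℝ) ≤ ∑ i, (u i - ustar i) ^ 2 := Finset.sum_nonneg fun i _ => sq_nonneg _
    have key : ∀ t : ℝ, 0 < t → t ≤ 1 →
        ∑ i, (u i - ustar i) * (s i - ustar i) ≤ (t / 2) * ∑ i, (u i - ustar i) ^ 2 := by
      intro t ht ht1
      have hmem := hconv huK hu (by linarith : (0:ℝ) ≤ 1 - t) ht.le (by ring)
      have h2 := isMinOn_iff.mp humin _ hmem
      have hexp : ∑ i, (s i - ((1 - t) • ustar + t • u) i) ^ 2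
          = ∑ i, (s i - ustar i) ^ 2
            - 2 * t * (∑ i, (u i - ustar i) * (s i - ustar i))
            + t ^ 2 * ∑ i, (u i - ustar i) ^ 2 := by
        rw [Finset.mul_sum, Finset.mul_sum, ← Finset.sum_sub_distrib, ← Finset.sum_add_distrib]
        refine Finset.sum_congr rfl fun i _ => ?_
        simp only [Pi.add_apply, Pi.smul_apply, smul_eq_mul]
        ring
      rw [hexp] at h2
      have h3 : t * (2 * ∑ i, (u i - ustar i) * (s i - ustar i))
          ≤ t * (t * ∑ i, (u i - ustar i) ^ 2) := by nlinarith
      have h4 := le_of_mul_le_mul_left h3 ht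
      linarith
    have hle : ∀ ε : ℝ, 0 < ε → ∑ i, (u i - ustar i) * (s i - ustar i) ≤ 0 + ε := by
      intro ε hε
      set C := ∑ i, (u i - ustar i) ^ 2 with hCdef
      have hden : (0:ℝ) < C + 1 := by linarith
      have ht : 0 < min 1 (ε / (C + 1)) := lt_min one_pos (div_pos hε hden)
      have h5 := key _ ht (min_le_left _ _)
      have h6 : (min 1 (ε / (C + 1)) / 2) * C ≤ (ε / (C + 1)) * C := by
        have := min_le_right 1 (ε / (C + 1))
        nlinarith
      have h7 : (ε / (C + 1)) * C ≤ ε := by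
        rw [div_mul_eq_mul_div, div_le_iff₀ hden]
        nlinarith
      linarith
    exact le_of_forall_pos_le_add hle |>.trans (by norm_num)
  have hmin_p := stmt11_main hlam s ustar zs hzs hus hchar
  -- convexity of the penalty, for uniqueness
  have hgconv : ∀ y w : Fin N → ℝ,
      lam * (∑ i, ∑ j, if i < j then |(y i + w i) / 2 - (y j + w j) / 2| else 0)
        ≤ (1/2) * (lam * ∑ i, ∑ j, if i < j then |y i - y j| else 0)
          + (1/2) * (lam * ∑ i, ∑ j, if i < j then |w i - w j| else 0) := by
    intro y w
    have hmid : (∑ i, ∑ j, if i < j then |(y i + w i) / 2 - (y j + w j) / 2| else 0)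
        ≤ (1/2) * (∑ i, ∑ j, if i < j then |y i - y j| else 0)
          + (1/2) * (∑ i, ∑ j, if i < j then |w i - w j| else 0) := by
      rw [Finset.mul_sum, Finset.mul_sum, ← Finset.sum_add_distrib]
      refine Finset.sum_le_sum fun i _ => ?_
      rw [Finset.mul_sum, Finset.mul_sum, ← Finset.sum_add_distrib]
      refine Finset.sum_le_sum fun j _ => ?_
      split_ifs with h
      · have e : (y i + w i) / 2 - (y j + w j) / 2 = ((y i - y j) + (w i - w j)) / 2 := by ring
        rw [e, abs_div, abs_two]
        have h1 := abs_add_le (y i - y j) (w i - w j)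
        linarith
      · simp
    nlinarith [hlam.le, hmid]
  have huniq : ∀ y : Fin N → ℝ, (∀ π, pfun lam s y ≤ pfun lam s π) →
      y = fun i => s i - ustar i := by
    intro y hy
    exact stmt11_uniq s (fun π => lam * ∑ i, ∑ j, if i < j then |π i - π j| else 0)
      (fun y w => hgconv y w) y _ hy hmin_p
  refine ⟨hne, hcomp, hconv, ⟨fun i => s i - ustar i, hmin_p, huniq⟩, ?_⟩
  intro πstar hst
  have he := huniq πstar hst
  have hsu : s - πstar = ustar := by
    rw [he]; funext i; simp [Pi.sub_apply]
  constructor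
  · rw [hsu]; exact ⟨zs, hzs, hus⟩
  · intro u hu
    have h1 : s - (s - πstar) = πstar := by
      funext i; simp [Pi.sub_apply]
    rw [h1, he]
    unfold eunorm
    apply Real.sqrt_le_sqrt
    have h2 := isMinOn_iff.mp humin u hu
    simp only [] at h2 ⊢
    calc ∑ i, (s i - ustar i) ^ 2 ≤ ∑ i, (s i - u i) ^ 2 := h2
      _ = ∑ i, (s - u) i ^ 2 := Finset.sum_congr rfl fun i _ => by simp [Pi.sub_apply]
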